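/- arXiv:2210.12473 — 2 statements merged into one kernel-verified Lean document; each statement's English description precedes it below -/
import Mathlib

section
/- Let (M, {m_k}) be an A∞-module (right type A structure) over the torus algebra 𝒜 over ℤ/2, and fix n₁ ≥ 1. Let M̄ = ⊕_{j=1}^{n₁} M, write elements as (y : j), and define m̄_k((y : j), a₁, …, a_{k−1}) = (m_k(y, a₁, …, a_{k−1}) : [j + l]) where l is the number of indices i for which a_i ∈ {ρ₃, ρ₂₃, ρ₁₂₃} and [·] denotes the representative mod n₁ in {1,…,n₁}. Then (M̄, {m̄_k}) satisfies the A∞-structural equations: for all k, x ∈ M̄, a₁,…,a_{k−1} among basis elements of 𝒜, Σ_{j=1}^{k} m̄_{k−j+1}(m̄_j(x, a₁,…,a_{j−1}), a_j,…,a_{k−1}) + Σ_{j=1}^{k−2} m̄_{k−1}(x, a₁,…,a_{j−1}, a_j·a_{j+1}, a_{j+2},…,a_{k−1}) = 0. -/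
/-- Basis elements of the torus algebra 𝒜 over ℤ/2. -/
inductive TB : Type
  | i1 | i2 | r1 | r2 | r3 | r12 | r23 | r123
  deriving DecidableEq

instance : Fintype TB :=
  ⟨{.i1, .i2, .r1, .r2, .r3, .r12, .r23, .r123}, by intro x; cases x <;> decide⟩

/-- Multiplication table on basis elements; `none` means the product is zero.
Convention: `i₁ρ₂₃ = ρ₂₃ = ρ₂₃i₁`, the only nonzero products among the ρ's are
ρ₁ρ₂ = ρ₁₂, ρ₂ρ₃ = ρ₂₃, ρ₁ρ₂₃ = ρ₁₂₃, ρ₁₂ρ₃ = ρ₁₂₃. -/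
def bmul : TB → TB → Option TB
  | .i1, .i1 => some .i1
  | .i2, .i2 => some .i2
  | .i1, .r2 => some .r2
  | .r2, .i2 => some .r2
  | .i2, .r3 => some .r3
  | .r3, .i1 => some .r3
  | .i2, .r1 => some .r1
  | .r1, .i1 => some .r1
  | .i2, .r12 => some .r12
  | .r12, .i2 => some .r12
  | .i1, .r23 => some .r23
  | .r23, .i1 => some .r23
  | .i2, .r123 => some .r123
  | .r123, .i1 => some .r123
  | .r1, .r2 => some .r12
  | .r2, .r3 => some .r23
  | .r1, .r23 => some .r123
  | .r12, .r3 => some .r123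
  | _, _ => none

/-- The torus algebra as the ℤ/2-vector space of functions on the basis. -/
abbrev TorusAlg : Type := TB → ZMod 2

/-- The basis vector (delta function) corresponding to a basis element. -/
def bas (a : TB) : TorusAlg := fun b => if b = a then 1 else 0

/-- Multiplication of the torus algebra, extended bilinearly from the table. -/
def amul (f g : TorusAlg) : TorusAlg := fun c =>
  ∑ a : TB, ∑ b : TB, (if bmul a b = some c then f a * g b else 0)

/-- The unit 1 = i₁ + i₂ of the torus algebra. -/
def aone : TorusAlg := bas .i1 + bas .i2

/-- Shift count: `l(a) = 1` for a ∈ {ρ₃, ρ₂₃, ρ₁₂₃}, `l(a) = 0` otherwise. -/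
def lB : TB → ℕ
  | .r3 => 1
  | .r23 => 1
  | .r123 => 1
  | _ => 0

/-- Total shift count of a list of algebra inputs. -/
def lL (as : List TB) : ℕ := (as.map lB).sum

/-- Merge the entries at positions i, i+1 of the list using the algebra product;
`none` if the product is zero (or the positions do not exist). -/
def splitPair (as : List TB) (i : ℕ) : Option (List TB) :=
  match as.drop i with
  | a :: b :: rest => (bmul a b).map (fun c => as.take i ++ c :: rest)
  | _ => none

/-- The A∞ (right type A) structural equations, at the level of basis inputs from 𝒜:
Σⱼ m_{k−j+1}(m_j(x,a₁,…,a_{j−1}),a_j,…,a_{k−1})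
  + Σⱼ m_{k−1}(x,a₁,…,a_j·a_{j+1},…,a_{k−1}) = 0 (over ℤ/2). -/
def ainfRel {M : Type*} [AddCommMonoid M] (m : M → List TB → M) : Prop :=
  ∀ (x : M) (as : List TB),
    (∑ j ∈ Finset.range (as.length + 1), m (m x (as.take j)) (as.drop j)) +
      (∑ i ∈ Finset.range as.length, (splitPair as i).elim 0 (fun as' => m x as')) = 0

/-- The shifted ("orbifold") operations m̄ on M̄ = ⊕_{j ∈ ℤ/n} M:
m̄((y:j), a₁,…,a_{k−1}) = (m(y,a₁,…,a_{k−1}) : j + l), where l counts the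
arguments lying in {ρ₃, ρ₂₃, ρ₁₂₃}. -/
def mbar {M : Type*} (n : ℕ) (m : M → List TB → M) (v : ZMod n → M) (as : List TB) :
    ZMod n → M :=
  fun i => m (v (i - (lL as : ZMod n))) as

/-- Type D structure equation for coefficients d : coefficient of ρ_a ⊗ x_k in δ₁(x_j):
(μ ⊗ id) ∘ (id ⊗ δ₁) ∘ δ₁ = 0. -/
def dRel {V : Type*} [Fintype V] (d : V → TB → V → ZMod 2) : Prop :=
  ∀ (j k : V) (c : TB),
    (∑ m : V, ∑ a : TB, ∑ b : TB,
      (if bmul a b = some c then d j a m * d m b k else 0)) = 0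

/-- Coefficients of the type D structure D_n: δ₁(x_j) = ρ₂₃ ⊗ x_{j+1}. -/
def dD (n : ℕ) : ZMod n → TB → ZMod n → ZMod 2 :=
  fun j a k => if a = TB.r23 ∧ k = j + 1 then 1 else 0

/-- Coefficients of the iterated maps δ_k of a type D structure:
`itD d k j as k'` is the coefficient of (ρ_{as} ⊗ x_{k'}) in δ_k(x_j),
for `as` a list of length k. -/
def itD {V : Type*} [Fintype V] [DecidableEq V] (d : V → TB → V → ZMod 2) :
    ℕ → V → List TB → V → ZMod 2
  | 0, j, as, k => if as = [] ∧ j = k then 1 else 0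
  | _ + 1, _, [], _ => 0
  | k + 1, j, a :: rest, k' => ∑ mm : V, d j a mm * itD d k mm rest k'

/-- The box tensor differential of M ⊠ D_n (cut off at length K):
δ^⊠(y ⊗ x_j) = Σ_{k} m_{k+1}(y, ρ₂₃,…,ρ₂₃) ⊗ x_{j+k}, written on ⊕_{j ∈ ℤ/n} M. -/
def boxDn {M : Type*} [AddCommMonoid M] (n K : ℕ) (m : M → List TB → M)
    (v : ZMod n → M) : ZMod n → M :=
  fun i => ∑ k ∈ Finset.range K, m (v (i - (k : ZMod n))) (List.replicate k TB.r23)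

/-- The box tensor differential of M ⊠ N for a general type D structure with
coefficients d (cut off at length K):
δ^⊠(x ⊗ y) = Σ_{k≥0} (m_{k+1} ⊗ id)(x ⊗ δ_k(y)). -/
def boxD {M V : Type*} [AddCommMonoid M] [Module (ZMod 2) M] [Fintype V] [DecidableEq V]
    (K : ℕ) (m : M → List TB → M) (d : V → TB → V → ZMod 2) (w : V → M) : V → M :=
  fun k' => ∑ k ∈ Finset.range K, ∑ j : V, ∑ as : Fin k → TB,
    itD d k j (List.ofFn as) k' • m (w j) (List.ofFn as)

/-- The A∞-morphism equations for t : M₁ → M₂ between type A structures (over ℤ/2). -/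
def ainfMor {M₁ M₂ : Type*} [AddCommMonoid M₁] [AddCommMonoid M₂]
    (m1 : M₁ → List TB → M₁) (m2 : M₂ → List TB → M₂) (t : M₁ → List TB → M₂) : Prop :=
  ∀ (x : M₁) (as : List TB),
    (∑ j ∈ Finset.range (as.length + 1), t (m1 x (as.take j)) (as.drop j)) +
      (∑ j ∈ Finset.range (as.length + 1), m2 (t x (as.take j)) (as.drop j)) +
      (∑ i ∈ Finset.range as.length, (splitPair as i).elim 0 (fun as' => t x as')) = 0

/-- The shifted morphism T between shifted structures. -/
def tbar {M₁ M₂ : Type*} (n : ℕ) (t : M₁ → List TB → M₂) (v : ZMod n → M₁)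
    (as : List TB) : ZMod n → M₂ :=
  fun i => t (v (i - (lL as : ZMod n))) as

/-- The bracket [j] ∈ {1,…,n}: [j] = n if n ∣ j, and [j] = j mod n otherwise. -/
def brk (n : ℕ) (j : ℤ) : ℤ := if (n : ℤ) ∣ j then (n : ℤ) else j % n

lemma lB_bmul : ∀ a b c : TB, bmul a b = some c → lB c = lB a + lB b := by decide

lemma lL_append (l1 l2 : List TB) : lL (l1 ++ l2) = lL l1 + lL l2 := by
  simp [lL]

lemma lL_take_drop (as : List TB) (j : ℕ) :
    lL (as.take j) + lL (as.drop j) = lL as := by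
  rw [← lL_append, List.take_append_drop]

lemma lL_splitPair (as : List TB) (i : ℕ) (as' : List TB)
    (h : splitPair as i = some as') : lL as' = lL as := by
  unfold splitPair at h
  rcases hd : as.drop i with _ | ⟨a, rest0⟩
  · rw [hd] at h; simp at h
  rcases rest0 with _ | ⟨b, rest⟩
  · rw [hd] at h; simp at h
  rw [hd] at h
  dsimp only at h
  rcases hc : bmul a b with _ | c
  · rw [hc] at h; simp at h
  rw [hc] at h
  simp only [Option.map_some] at h
  cases h.symm
  have := lB_bmul a b c hc
  have hAs : as = as.take i ++ a :: b :: rest := by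
    conv_lhs => rw [← List.take_append_drop i as, hd]
  rw [lL_append]
  conv_rhs => rw [hAs, lL_append]
  simp [lL, this]
  ring

/-- Lemma 4.1: the shifted operations m̄ on M̄ = ⊕_{j=1}^{n₁} M
satisfy the A∞-structural equations. -/
theorem stmt4 {M : Type*} [AddCommMonoid M] (n₁ : ℕ) (hn : 1 ≤ n₁)
    (m : M → List TB → M) (hm : ainfRel m) :
    ainfRel (mbar n₁ m) := by
  intro x as
  funext i
  have key := hm (x (i - (lL as : ZMod n₁))) as
  have h1 : ∀ j, mbar n₁ m (mbar n₁ m x (as.take j)) (as.drop j) i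
      = m (m (x (i - (lL as : ZMod n₁))) (as.take j)) (as.drop j) := by
    intro j
    simp only [mbar]
    congr 2
    have := lL_take_drop as j
    rw [← this]
    push_cast
    ring
  have h2 : ∀ k, (splitPair as k).elim (0 : ZMod n₁ → M)
        (fun as' => mbar n₁ m x as') i
      = (splitPair as k).elim (0 : M)
        (fun as' => m (x (i - (lL as : ZMod n₁))) as') := by
    intro k
    rcases hs : splitPair as k with _ | as'
    · simp
    · simp only [Option.elim, mbar, lL_splitPair as k as' hs]
  calc (∑ j ∈ Finset.range (as.length + 1),
          mbar n₁ m (mbar n₁ m x (as.take j)) (as.drop j) +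
        ∑ k ∈ Finset.range as.length,
          (splitPair as k).elim 0 (fun as' => mbar n₁ m x as')) i
      = (∑ j ∈ Finset.range (as.length + 1),
          m (m (x (i - (lL as : ZMod n₁))) (as.take j)) (as.drop j)) +
        (∑ k ∈ Finset.range as.length,
          (splitPair as k).elim 0
            (fun as' => m (x (i - (lL as : ZMod n₁))) as')) := by
        simp only [Pi.add_apply, Finset.sum_apply]
        rw [Finset.sum_congr rfl (fun j _ => h1 j),
          Finset.sum_congr rfl (fun k _ => h2 k)]
    _ = 0 := key
end

section
/- Let M be a bounded type A structure over the torus algebra and N a type D structure (not necessarily bounded). Then the box tensor differential δ^⊠(x ⊗ y) = Σ_{k≥0}(m_{k+1} ⊗ id)(x ⊗ δ_k(y)) on M ⊗_ℐ N is well-defined (the sum is finite) and satisfies δ^⊠ ∘ δ^⊠ = 0, assuming the A∞ relations for M and the type D relation for N. -/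
namespace Stmt17Aux

open Finset

instance : Inhabited TB := ⟨.i1⟩

/-- Finset of lists of length `k`. -/
def Lset (k : ℕ) : Finset (List TB) :=
  Finset.univ.image (fun as : Fin k → TB => List.ofFn as)

lemma mem_Lset {l : List TB} {k : ℕ} : l ∈ Lset k ↔ l.length = k := by
  simp only [Lset, Finset.mem_image, Finset.mem_univ, true_and]
  constructor
  · rintro ⟨as, rfl⟩; simp
  · rintro rfl; exact ⟨l.get, List.ofFn_get l⟩

/-- Finset of lists of length `< K`. -/
def LLT (K : ℕ) : Finset (List TB) := (Finset.range K).biUnion Lset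

lemma mem_LLT {l : List TB} {K : ℕ} : l ∈ LLT K ↔ l.length < K := by
  simp only [LLT, Finset.mem_biUnion, Finset.mem_range, mem_Lset]
  constructor
  · rintro ⟨k, hk, rfl⟩; exact hk
  · intro h; exact ⟨l.length, h, rfl⟩

lemma sum_LLT {M : Type*} [AddCommMonoid M] (K : ℕ) (f : List TB → M) :
    ∑ l ∈ LLT K, f l = ∑ k ∈ Finset.range K, ∑ l ∈ Lset k, f l := by
  refine Finset.sum_biUnion ?_
  intro a _ b _ hab
  simp only [Finset.disjoint_left]
  intro l hla hlb
  exact hab (by rw [← mem_Lset.1 hla, mem_Lset.1 hlb])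

lemma sum_ofFn {M : Type*} [AddCommMonoid M] (k : ℕ) (f : List TB → M) :
    ∑ as : Fin k → TB, f (List.ofFn as) = ∑ l ∈ Lset k, f l :=
  (Finset.sum_image (fun _ _ _ _ h => List.ofFn_injective h)).symm

section
variable {V : Type*} [Fintype V] [DecidableEq V]

/-- Length-free form of `itD`. -/
def cf (d : V → TB → V → ZMod 2) (j : V) (l : List TB) (k' : V) : ZMod 2 :=
  itD d l.length j l k'

lemma cf_nil (d : V → TB → V → ZMod 2) (j k' : V) :
    cf d j [] k' = if j = k' then 1 else 0 := by
  simp [cf, itD]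

lemma cf_cons (d : V → TB → V → ZMod 2) (j k' : V) (a : TB) (t : List TB) :
    cf d j (a :: t) k' = ∑ mm : V, d j a mm * cf d mm t k' := rfl

lemma cf_comp (d : V → TB → V → ZMod 2) (l₁ l₂ : List TB) (j k' : V) :
    cf d j (l₁ ++ l₂) k' = ∑ p : V, cf d j l₁ p * cf d p l₂ k' := by
  induction l₁ generalizing j with
  | nil =>
      simp [cf_nil, ite_mul, Finset.sum_ite_eq]
  | cons a t ih =>
      rw [List.cons_append, cf_cons]
      simp only [ih, Finset.mul_sum, cf_cons, Finset.sum_mul]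
      rw [Finset.sum_comm]
      simp only [mul_assoc]

end

section
variable {β : Type*} [AddCommMonoid β]

lemma sum_swap3 {α₁ α₂ α₃ : Type*} (s₁ : Finset α₁) (s₂ : Finset α₂) (s₃ : Finset α₃)
    (f : α₁ → α₂ → α₃ → β) :
    ∑ a ∈ s₁, ∑ b ∈ s₂, ∑ c ∈ s₃, f a b c = ∑ c ∈ s₃, ∑ a ∈ s₁, ∑ b ∈ s₂, f a b c :=
  calc ∑ a ∈ s₁, ∑ b ∈ s₂, ∑ c ∈ s₃, f a b c
      = ∑ a ∈ s₁, ∑ c ∈ s₃, ∑ b ∈ s₂, f a b c :=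
        Finset.sum_congr rfl fun _ _ => Finset.sum_comm
    _ = ∑ c ∈ s₃, ∑ a ∈ s₁, ∑ b ∈ s₂, f a b c := Finset.sum_comm

lemma sum_swap4 {α₁ α₂ α₃ α₄ : Type*} (s₁ : Finset α₁) (s₂ : Finset α₂) (s₃ : Finset α₃)
    (s₄ : Finset α₄) (f : α₁ → α₂ → α₃ → α₄ → β) :
    ∑ a ∈ s₁, ∑ b ∈ s₂, ∑ c ∈ s₃, ∑ e ∈ s₄, f a b c e
      = ∑ c ∈ s₃, ∑ e ∈ s₄, ∑ a ∈ s₁, ∑ b ∈ s₂, f a b c e :=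
  calc ∑ a ∈ s₁, ∑ b ∈ s₂, ∑ c ∈ s₃, ∑ e ∈ s₄, f a b c e
      = ∑ a ∈ s₁, ∑ c ∈ s₃, ∑ b ∈ s₂, ∑ e ∈ s₄, f a b c e :=
        Finset.sum_congr rfl fun _ _ => Finset.sum_comm
    _ = ∑ c ∈ s₃, ∑ a ∈ s₁, ∑ b ∈ s₂, ∑ e ∈ s₄, f a b c e := Finset.sum_comm
    _ = ∑ c ∈ s₃, ∑ a ∈ s₁, ∑ e ∈ s₄, ∑ b ∈ s₂, f a b c e :=
        Finset.sum_congr rfl fun _ _ => Finset.sum_congr rfl fun _ _ => Finset.sum_comm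
    _ = ∑ c ∈ s₃, ∑ e ∈ s₄, ∑ a ∈ s₁, ∑ b ∈ s₂, f a b c e :=
        Finset.sum_congr rfl fun _ _ => Finset.sum_comm

lemma sum_swap5 {α₁ α₂ α₃ α₄ α₅ : Type*} (s₁ : Finset α₁) (s₂ : Finset α₂) (s₃ : Finset α₃)
    (s₄ : Finset α₄) (s₅ : Finset α₅) (f : α₁ → α₂ → α₃ → α₄ → α₅ → β) :
    ∑ a ∈ s₁, ∑ b ∈ s₂, ∑ p ∈ s₃, ∑ q ∈ s₄, ∑ r ∈ s₅, f a b p q r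
      = ∑ p ∈ s₃, ∑ r ∈ s₅, ∑ q ∈ s₄, ∑ a ∈ s₁, ∑ b ∈ s₂, f a b p q r :=
  calc ∑ a ∈ s₁, ∑ b ∈ s₂, ∑ p ∈ s₃, ∑ q ∈ s₄, ∑ r ∈ s₅, f a b p q r
      = ∑ a ∈ s₁, ∑ p ∈ s₃, ∑ b ∈ s₂, ∑ q ∈ s₄, ∑ r ∈ s₅, f a b p q r :=
        Finset.sum_congr rfl fun _ _ => Finset.sum_comm
    _ = ∑ p ∈ s₃, ∑ a ∈ s₁, ∑ b ∈ s₂, ∑ q ∈ s₄, ∑ r ∈ s₅, f a b p q r := Finset.sum_comm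
    _ = ∑ p ∈ s₃, ∑ q ∈ s₄, ∑ r ∈ s₅, ∑ a ∈ s₁, ∑ b ∈ s₂, f a b p q r :=
        Finset.sum_congr rfl fun _ _ => sum_swap4 _ _ _ _ _
    _ = ∑ p ∈ s₃, ∑ r ∈ s₅, ∑ q ∈ s₄, ∑ a ∈ s₁, ∑ b ∈ s₂, f a b p q r :=
        Finset.sum_congr rfl fun _ _ => Finset.sum_comm

end

section
variable {M : Type*} [AddCommMonoid M]

lemma msum {ι : Type*} (m : M → List TB → M)
    (hadd : ∀ (x y : M) (as : List TB), m (x + y) as = m x as + m y as)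
    (h0 : ∀ as : List TB, m (0 : M) as = 0)
    (s : Finset ι) (f : ι → M) (l : List TB) :
    m (∑ i ∈ s, f i) l = ∑ i ∈ s, m (f i) l := by
  classical
  induction s using Finset.induction with
  | empty => simp [h0]
  | insert _ _ h ih => rw [Finset.sum_insert h, hadd, ih, Finset.sum_insert h]

lemma optElim (o : Option TB) (f : TB → M) :
    o.elim 0 f = ∑ cc : TB, if o = some cc then f cc else 0 := by
  cases o with
  | none => simp
  | some a => simp [Finset.sum_ite_eq]

end

section
variable {M : Type*} [AddCommGroup M] [Module (ZMod 2) M]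

lemma msmul (m : M → List TB → M)
    (h0 : ∀ as : List TB, m (0 : M) as = 0)
    (c : ZMod 2) (x : M) (l : List TB) :
    m (c • x) l = c • m x l := by
  have hc : c = 0 ∨ c = 1 := by fin_cases c <;> [exact Or.inl rfl; exact Or.inr rfl]
  rcases hc with rfl | rfl
  · simp [h0]
  · simp

lemma add_self_char2 (x : M) : x + x = 0 := by
  have h := two_smul (ZMod 2) x
  rw [show (2 : ZMod 2) = 0 by decide, zero_smul] at h
  exact h.symm

lemma eq_of_add_eq_zero_char2 {x y : M} (h : x + y = 0) : x = y := by
  calc x = x + (y + y) := by rw [add_self_char2, add_zero]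
    _ = (x + y) + y := (add_assoc _ _ _).symm
    _ = y := by rw [h, zero_add]

lemma smul_ite0 (c : ZMod 2) (P : Prop) [Decidable P] (v : M) :
    (c • if P then v else 0) = (if P then c else 0) • v := by
  split_ifs <;> simp

end

lemma split_reindex {M : Type*} [AddCommMonoid M] (B : ℕ) (F : List TB → List TB → M)
    (h1 : ∀ l₁ l₂, B ≤ l₁.length → F l₁ l₂ = 0)
    (h2 : ∀ l₁ l₂, B ≤ l₂.length → F l₁ l₂ = 0) :
    ∑ l₁ ∈ LLT B, ∑ l₂ ∈ LLT B, F l₁ l₂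
      = ∑ l ∈ LLT (2*B), ∑ i ∈ Finset.range (l.length+1), F (l.take i) (l.drop i) := by
  classical
  have hfil : ∀ l : List TB,
      ∑ i ∈ Finset.range (l.length+1), F (l.take i) (l.drop i)
        = ∑ i ∈ (Finset.range (l.length+1)).filter
            (fun i => i < B ∧ l.length - i < B), F (l.take i) (l.drop i) := by
    intro l
    refine (Finset.sum_filter_of_ne ?_).symm
    intro i hi hne
    by_contra hP
    have hi' : i ≤ l.length := by
      have := Finset.mem_range.1 hi; omega
    rcases Nat.lt_or_ge i B with h | h
    · have hlen : ¬ (l.length - i < B) := fun hc => hP ⟨h, hc⟩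
      have : B ≤ (l.drop i).length := by
        rw [List.length_drop]; omega
      exact hne (h2 _ _ this)
    · have : B ≤ (l.take i).length := by
        rw [List.length_take]; omega
      exact hne (h1 _ _ this)
  calc ∑ l₁ ∈ LLT B, ∑ l₂ ∈ LLT B, F l₁ l₂
      = ∑ p ∈ (LLT B).sigma (fun _ => LLT B), F p.1 p.2 :=
        Finset.sum_sigma' _ _ _
    _ = ∑ q ∈ (LLT (2*B)).sigma (fun l => (Finset.range (l.length+1)).filter
          (fun i => i < B ∧ l.length - i < B)), F (q.1.take q.2) (q.1.drop q.2) := by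
        refine Finset.sum_nbij' (fun p => ⟨p.1 ++ p.2, p.1.length⟩)
          (fun q => ⟨q.1.take q.2, q.1.drop q.2⟩) ?_ ?_ ?_ ?_ ?_
        · rintro ⟨l₁, l₂⟩ hp
          rw [Finset.mem_sigma] at hp
          dsimp only at *
          have h1' := mem_LLT.1 hp.1
          have h2' := mem_LLT.1 hp.2
          rw [Finset.mem_sigma]
          constructor
          · exact mem_LLT.2 (by rw [List.length_append]; omega)
          · simp only [Finset.mem_filter, Finset.mem_range, List.length_append]
            omega
        · rintro ⟨l, i⟩ hq
          rw [Finset.mem_sigma] at hq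
          dsimp only at *
          have hl := mem_LLT.1 hq.1
          have hi := hq.2
          simp only [Finset.mem_filter, Finset.mem_range] at hi
          rw [Finset.mem_sigma]
          constructor
          · exact mem_LLT.2 (by rw [List.length_take]; omega)
          · exact mem_LLT.2 (by rw [List.length_drop]; omega)
        · rintro ⟨l₁, l₂⟩ _
          simp [List.take_left, List.drop_left]
        · rintro ⟨l, i⟩ hq
          rw [Finset.mem_sigma] at hq
          have hi : i ≤ l.length := by
            have := hq.2
            simp only [Finset.mem_filter, Finset.mem_range] at this
            omega
          simp [List.take_append_drop, List.length_take, Nat.min_eq_left hi]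
        · rintro ⟨l₁, l₂⟩ _
          simp [List.take_left, List.drop_left]
    _ = ∑ l ∈ LLT (2*B), ∑ i ∈ (Finset.range (l.length+1)).filter
          (fun i => i < B ∧ l.length - i < B), F (l.take i) (l.drop i) :=
        Finset.sum_sigma _ _ _
    _ = ∑ l ∈ LLT (2*B), ∑ i ∈ Finset.range (l.length+1), F (l.take i) (l.drop i) :=
        Finset.sum_congr rfl fun l _ => (hfil l).symm

lemma Lset_zero : Lset 0 = {([] : List TB)} := by
  ext l
  simp [mem_Lset, List.length_eq_zero_iff]

lemma sum_Lset_cons {M : Type*} [AddCommMonoid M] (k : ℕ) (f : List TB → M) :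
    ∑ l ∈ Lset (k+1), f l = ∑ a : TB, ∑ t ∈ Lset k, f (a :: t) := by
  classical
  rw [← Finset.sum_product']
  refine Finset.sum_nbij' (fun l => (l.head!, l.tail)) (fun p => p.1 :: p.2)
    ?_ ?_ ?_ ?_ ?_
  · intro l hl
    have hlen := mem_Lset.1 hl
    refine Finset.mem_product.2 ⟨Finset.mem_univ _, mem_Lset.2 ?_⟩
    rw [List.length_tail, hlen]
    omega
  · intro p hp
    refine mem_Lset.2 ?_
    have := mem_Lset.1 (Finset.mem_product.1 hp).2
    simp [this]
  · intro l hl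
    have hlen := mem_Lset.1 hl
    have hne : l ≠ [] := by
      intro h; rw [h] at hlen; simp at hlen
    exact List.cons_head!_tail hne
  · intro p _
    simp
  · intro l hl
    have hlen := mem_Lset.1 hl
    have hne : l ≠ [] := by
      intro h; rw [h] at hlen; simp at hlen
    rw [List.cons_head!_tail hne]

lemma sum_LLT_cons {M : Type*} [AddCommMonoid M] (K : ℕ) (f : List TB → M) :
    ∑ l ∈ LLT (K+1), f l = f [] + ∑ a : TB, ∑ t ∈ LLT K, f (a :: t) := by
  rw [sum_LLT, Finset.sum_range_succ']
  have h0 : ∑ l ∈ Lset 0, f l = f [] := by rw [Lset_zero, Finset.sum_singleton]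
  rw [h0]
  have h1 : ∑ k ∈ Finset.range K, ∑ l ∈ Lset (k+1), f l
      = ∑ a : TB, ∑ t ∈ LLT K, f (a :: t) := by
    calc ∑ k ∈ Finset.range K, ∑ l ∈ Lset (k+1), f l
        = ∑ k ∈ Finset.range K, ∑ a : TB, ∑ t ∈ Lset k, f (a :: t) :=
          Finset.sum_congr rfl fun k _ => sum_Lset_cons k f
      _ = ∑ a : TB, ∑ k ∈ Finset.range K, ∑ t ∈ Lset k, f (a :: t) := Finset.sum_comm
      _ = ∑ a : TB, ∑ t ∈ LLT K, f (a :: t) :=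
          Finset.sum_congr rfl fun a _ => (sum_LLT K _).symm
  rw [h1, add_comm]

section
variable {M V : Type*} [AddCommGroup M] [Module (ZMod 2) M] [Fintype V] [DecidableEq V]

/-- The summand appearing on the "merge" side of the A∞ relation. -/
def Gfun (m : M → List TB → M) (d : V → TB → V → ZMod 2) (x : M) (j₁ k'' : V)
    (l₁ : List TB) : List TB → M
  | a :: b :: rest =>
      cf d j₁ (l₁ ++ a :: b :: rest) k'' •
        (bmul a b).elim 0 (fun cc => m x (l₁ ++ cc :: rest))
  | _ => 0

lemma Gfun_nil (m : M → List TB → M) (d : V → TB → V → ZMod 2) (x : M) (j₁ k'' : V)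
    (l₁ : List TB) : Gfun m d x j₁ k'' l₁ [] = 0 := rfl

lemma Gfun_single (m : M → List TB → M) (d : V → TB → V → ZMod 2) (x : M) (j₁ k'' : V)
    (l₁ : List TB) (a : TB) : Gfun m d x j₁ k'' l₁ [a] = 0 := rfl

lemma Gfun_zero₁ (m : M → List TB → M) (d : V → TB → V → ZMod 2) (x : M) (j₁ k'' : V)
    (K : ℕ) (hb : ∀ (x : M) (as : List TB), K ≤ as.length → m x as = 0)
    (l₁ l₂ : List TB) (h : K + 1 ≤ l₁.length) : Gfun m d x j₁ k'' l₁ l₂ = 0 := by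
  match l₂ with
  | [] => rfl
  | [a] => rfl
  | a :: b :: rest =>
    show cf d j₁ (l₁ ++ a :: b :: rest) k'' •
        (bmul a b).elim 0 (fun cc => m x (l₁ ++ cc :: rest)) = 0
    have hz : ∀ cc, m x (l₁ ++ cc :: rest) = 0 := fun cc =>
      hb _ _ (by rw [List.length_append]; simp; omega)
    cases hab : bmul a b <;> simp [hz]

lemma Gfun_zero₂ (m : M → List TB → M) (d : V → TB → V → ZMod 2) (x : M) (j₁ k'' : V)
    (K : ℕ) (hb : ∀ (x : M) (as : List TB), K ≤ as.length → m x as = 0)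
    (l₁ l₂ : List TB) (h : K + 1 ≤ l₂.length) : Gfun m d x j₁ k'' l₁ l₂ = 0 := by
  match l₂ with
  | [] => rfl
  | [a] => rfl
  | a :: b :: rest =>
    show cf d j₁ (l₁ ++ a :: b :: rest) k'' •
        (bmul a b).elim 0 (fun cc => m x (l₁ ++ cc :: rest)) = 0
    have hz : ∀ cc, m x (l₁ ++ cc :: rest) = 0 := fun cc =>
      hb _ _ (by rw [List.length_append]; simp at h ⊢; omega)
    cases hab : bmul a b <;> simp [hz]

lemma Gfun_splitPair (m : M → List TB → M) (d : V → TB → V → ZMod 2) (x : M)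
    (j₁ k'' : V) (l : List TB) (i : ℕ) :
    cf d j₁ l k'' • (splitPair l i).elim 0 (fun l' => m x l')
      = Gfun m d x j₁ k'' (l.take i) (l.drop i) := by
  have hl : l.take i ++ l.drop i = l := List.take_append_drop i l
  rcases hdrop : l.drop i with _ | ⟨a, tl⟩
  · simp [splitPair, hdrop, Gfun_nil]
  · rcases tl with _ | ⟨b, rest⟩
    · simp [splitPair, hdrop, Gfun_single]
    · have hsp : splitPair l i = (bmul a b).map (fun cc => l.take i ++ cc :: rest) := by
        rw [splitPair, hdrop]
      have hG : Gfun m d x j₁ k'' (l.take i) (a :: b :: rest)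
          = cf d j₁ (l.take i ++ a :: b :: rest) k'' •
              (bmul a b).elim 0 (fun cc => m x (l.take i ++ cc :: rest)) := rfl
      rw [hsp, hG]
      have hcf : l.take i ++ a :: b :: rest = l := by rw [← hdrop, hl]
      rw [hcf]
      cases hab : bmul a b <;> simp

end

lemma coef_merge {V : Type*} [Fintype V] [DecidableEq V]
    (d : V → TB → V → ZMod 2) (hd : dRel d) (j₁ k'' : V)
    (l₁ rest : List TB) (cc : TB) :
    ∑ a : TB, ∑ b : TB,
      (if bmul a b = some cc then cf d j₁ (l₁ ++ a :: b :: rest) k'' else 0) = 0 := by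
  have hcf : ∀ a b : TB, cf d j₁ (l₁ ++ a :: b :: rest) k''
      = ∑ p : V, ∑ q : V, ∑ r : V,
          cf d j₁ l₁ p * (d p a q * (d q b r * cf d r rest k'')) := by
    intro a b
    rw [cf_comp]
    refine Finset.sum_congr rfl fun p _ => ?_
    rw [cf_cons, Finset.mul_sum]
    refine Finset.sum_congr rfl fun q _ => ?_
    rw [cf_cons, Finset.mul_sum, Finset.mul_sum]
  have hpush : ∀ a b : TB,
      (if bmul a b = some cc then cf d j₁ (l₁ ++ a :: b :: rest) k'' else 0)
        = ∑ p : V, ∑ q : V, ∑ r : V,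
            (if bmul a b = some cc then
              cf d j₁ l₁ p * (d p a q * (d q b r * cf d r rest k'')) else 0) := by
    intro a b
    split_ifs with h
    · exact hcf a b
    · simp
  calc ∑ a : TB, ∑ b : TB,
        (if bmul a b = some cc then cf d j₁ (l₁ ++ a :: b :: rest) k'' else 0)
      = ∑ a : TB, ∑ b : TB, ∑ p : V, ∑ q : V, ∑ r : V,
          (if bmul a b = some cc then
            cf d j₁ l₁ p * (d p a q * (d q b r * cf d r rest k'')) else 0) := by
        exact Finset.sum_congr rfl fun a _ => Finset.sum_congr rfl fun b _ => hpush a b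
    _ = ∑ p : V, ∑ r : V, ∑ q : V, ∑ a : TB, ∑ b : TB,
          (if bmul a b = some cc then
            cf d j₁ l₁ p * (d p a q * (d q b r * cf d r rest k'')) else 0) :=
        sum_swap5 _ _ _ _ _ _
    _ = ∑ p : V, ∑ r : V, cf d j₁ l₁ p * cf d r rest k'' *
          (∑ q : V, ∑ a : TB, ∑ b : TB,
            (if bmul a b = some cc then d p a q * d q b r else 0)) := by
        refine Finset.sum_congr rfl fun p _ => Finset.sum_congr rfl fun r _ => ?_
        rw [Finset.mul_sum]
        refine Finset.sum_congr rfl fun q _ => ?_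
        rw [Finset.mul_sum]
        refine Finset.sum_congr rfl fun a _ => ?_
        rw [Finset.mul_sum]
        refine Finset.sum_congr rfl fun b _ => ?_
        split_ifs <;> ring
    _ = 0 := by
        refine Finset.sum_eq_zero fun p _ => Finset.sum_eq_zero fun r _ => ?_
        rw [hd p r cc, mul_zero]

lemma ainf_split {M : Type*} [AddCommGroup M] [Module (ZMod 2) M]
    (m : M → List TB → M) (hm : ainfRel m) (x : M) (l : List TB) :
    ∑ i ∈ Finset.range (l.length+1), m (m x (l.take i)) (l.drop i)
      = ∑ i ∈ Finset.range l.length, (splitPair l i).elim 0 (fun l' => m x l') :=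
  eq_of_add_eq_zero_char2 (hm x l)

end Stmt17Aux

/-- pairing differential: for M a bounded type A structure and N any
type D structure, the box differential is well-defined (independent of the cutoff
beyond the bound) and squares to zero. -/
theorem stmt17 {M V : Type*} [AddCommGroup M] [Module (ZMod 2) M]
    [Fintype V] [DecidableEq V]
    (K : ℕ) (m : M → List TB → M) (d : V → TB → V → ZMod 2)
    (hb : ∀ (x : M) (as : List TB), K ≤ as.length → m x as = 0)
    (hadd : ∀ (x y : M) (as : List TB), m (x + y) as = m x as + m y as)
    (h0 : ∀ as : List TB, m (0 : M) as = 0)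
    (hm : ainfRel m) (hd : dRel d) :
    (∀ K' : ℕ, K ≤ K' → boxD K' m d = boxD K m d) ∧
    (∀ w : V → M, boxD K m d (boxD K m d w) = 0) := by
  classical
  open Stmt17Aux in
  constructor
  · intro K' hK
    funext w k'
    simp only [boxD]
    refine (Finset.sum_subset (Finset.range_subset_range.2 hK) ?_).symm
    intro k _ hk
    refine Finset.sum_eq_zero fun j _ => Finset.sum_eq_zero fun as _ => ?_
    have hKk : K ≤ k := le_of_not_gt fun hc => hk (Finset.mem_range.2 hc)
    rw [hb _ _ (by rw [List.length_ofFn]; exact hKk), smul_zero]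
  · intro w
    funext k''
    have hbox : ∀ (v : V → M) (k' : V),
        boxD K m d v k' = ∑ j : V, ∑ l ∈ LLT K, cf d j l k' • m (v j) l := by
      intro v k'
      simp only [boxD]
      conv_lhs => rw [Finset.sum_comm]
      refine Finset.sum_congr rfl fun j _ => ?_
      rw [sum_LLT]
      refine Finset.sum_congr rfl fun k hk => ?_
      rw [← sum_ofFn]
      refine Finset.sum_congr rfl fun as _ => ?_
      congr 1
      simp [cf]
    rw [hbox]
    have hexp : ∀ (j₂ : V) (l₂ : List TB),
        m (boxD K m d w j₂) l₂
          = ∑ j₁ : V, ∑ l₁ ∈ LLT K, cf d j₁ l₁ j₂ • m (m (w j₁) l₁) l₂ := by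
      intro j₂ l₂
      rw [hbox, msum m hadd h0]
      refine Finset.sum_congr rfl fun j₁ _ => ?_
      rw [msum m hadd h0]
      exact Finset.sum_congr rfl fun l₁ _ => msmul m h0 _ _ _
    simp only [hexp, Finset.smul_sum, smul_smul]
    rw [sum_swap4]
    refine Finset.sum_eq_zero fun j₁ _ => ?_
    set x := w j₁ with hx
    have step1 : ∀ l₁ ∈ LLT K, ∑ j₂ : V, ∑ l₂ ∈ LLT K,
        (cf d j₂ l₂ k'' * cf d j₁ l₁ j₂) • m (m x l₁) l₂
          = ∑ l₂ ∈ LLT K, cf d j₁ (l₁ ++ l₂) k'' • m (m x l₁) l₂ := by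
      intro l₁ _
      rw [Finset.sum_comm]
      refine Finset.sum_congr rfl fun l₂ _ => ?_
      rw [← Finset.sum_smul, cf_comp]
      congr 1
      exact Finset.sum_congr rfl fun p _ => (mul_comm _ _)
    refine (Finset.sum_congr rfl step1).trans ?_
    have hsub : LLT K ⊆ LLT (K+1) := fun l hl => mem_LLT.2 (by have := mem_LLT.1 hl; omega)
    have hzero1 : ∀ l₁ l₂ : List TB, K ≤ l₁.length →
        cf d j₁ (l₁ ++ l₂) k'' • m (m x l₁) l₂ = 0 := fun l₁ l₂ h => by
      rw [hb _ _ h, h0, smul_zero]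
    have hzero2 : ∀ l₁ l₂ : List TB, K ≤ l₂.length →
        cf d j₁ (l₁ ++ l₂) k'' • m (m x l₁) l₂ = 0 := fun l₁ l₂ h => by
      rw [hb _ _ h, smul_zero]
    calc ∑ l₁ ∈ LLT K, ∑ l₂ ∈ LLT K, cf d j₁ (l₁ ++ l₂) k'' • m (m x l₁) l₂
        = ∑ l₁ ∈ LLT K, ∑ l₂ ∈ LLT (K+1), cf d j₁ (l₁ ++ l₂) k'' • m (m x l₁) l₂ :=
          Finset.sum_congr rfl fun l₁ _ => Finset.sum_subset hsub (fun l₂ _ h2 =>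
            hzero2 l₁ l₂ (le_of_not_gt fun hc => h2 (mem_LLT.2 hc)))
      _ = ∑ l₁ ∈ LLT (K+1), ∑ l₂ ∈ LLT (K+1), cf d j₁ (l₁ ++ l₂) k'' • m (m x l₁) l₂ :=
          Finset.sum_subset hsub (fun l₁ _ h1 => Finset.sum_eq_zero fun l₂ _ =>
            hzero1 l₁ l₂ (le_of_not_gt fun hc => h1 (mem_LLT.2 hc)))
      _ = ∑ l ∈ LLT (2*(K+1)), ∑ i ∈ Finset.range (l.length+1),
            cf d j₁ (l.take i ++ l.drop i) k'' • m (m x (l.take i)) (l.drop i) :=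
          split_reindex (K+1) (fun l₁ l₂ => cf d j₁ (l₁ ++ l₂) k'' • m (m x l₁) l₂)
            (fun l₁ l₂ h => hzero1 l₁ l₂ (by omega))
            (fun l₁ l₂ h => hzero2 l₁ l₂ (by omega))
      _ = ∑ l ∈ LLT (2*(K+1)), ∑ i ∈ Finset.range (l.length+1),
            Gfun m d x j₁ k'' (l.take i) (l.drop i) := by
          refine Finset.sum_congr rfl fun l _ => ?_
          calc ∑ i ∈ Finset.range (l.length+1),
                cf d j₁ (l.take i ++ l.drop i) k'' • m (m x (l.take i)) (l.drop i)
              = ∑ i ∈ Finset.range (l.length+1),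
                  cf d j₁ l k'' • m (m x (l.take i)) (l.drop i) :=
                Finset.sum_congr rfl fun i _ => by rw [List.take_append_drop]
            _ = cf d j₁ l k'' • ∑ i ∈ Finset.range (l.length+1),
                  m (m x (l.take i)) (l.drop i) := (Finset.smul_sum).symm
            _ = cf d j₁ l k'' • ∑ i ∈ Finset.range l.length,
                  (splitPair l i).elim 0 (fun l' => m x l') := by
                rw [ainf_split m hm x l]
            _ = ∑ i ∈ Finset.range l.length,
                  cf d j₁ l k'' • (splitPair l i).elim 0 (fun l' => m x l') :=
                Finset.smul_sum
            _ = ∑ i ∈ Finset.range l.length, Gfun m d x j₁ k'' (l.take i) (l.drop i) :=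
                Finset.sum_congr rfl fun i _ => Gfun_splitPair m d x j₁ k'' l i
            _ = ∑ i ∈ Finset.range (l.length+1), Gfun m d x j₁ k'' (l.take i) (l.drop i) := by
                rw [Finset.sum_range_succ, List.drop_length, Gfun_nil, add_zero]
      _ = ∑ l₁ ∈ LLT (K+1), ∑ l₂ ∈ LLT (K+1), Gfun m d x j₁ k'' l₁ l₂ :=
          (split_reindex (K+1) (fun l₁ l₂ => Gfun m d x j₁ k'' l₁ l₂)
            (fun l₁ l₂ h => Gfun_zero₁ m d x j₁ k'' K hb l₁ l₂ h)
            (fun l₁ l₂ h => Gfun_zero₂ m d x j₁ k'' K hb l₁ l₂ h)).symm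
      _ = 0 := by
          refine Finset.sum_eq_zero fun l₁ _ => ?_
          rw [sum_LLT_cons K (fun t => Gfun m d x j₁ k'' l₁ t), Gfun_nil, zero_add]
          have hext : ∀ a : TB, ∑ t ∈ LLT K, Gfun m d x j₁ k'' l₁ (a :: t)
              = ∑ t ∈ LLT (K+1), Gfun m d x j₁ k'' l₁ (a :: t) := fun a =>
            Finset.sum_subset hsub (fun t _ ht => Gfun_zero₂ m d x j₁ k'' K hb l₁ (a::t)
              (by have h' : ¬ t.length < K := fun hc => ht (mem_LLT.2 hc)
                  simp only [List.length_cons]; omega))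
          simp only [hext]
          have hcons : ∀ a : TB, ∑ t ∈ LLT (K+1), Gfun m d x j₁ k'' l₁ (a :: t)
              = ∑ b : TB, ∑ rest ∈ LLT K, Gfun m d x j₁ k'' l₁ (a :: b :: rest) := fun a => by
            rw [sum_LLT_cons K (fun t => Gfun m d x j₁ k'' l₁ (a :: t)), Gfun_single, zero_add]
          simp only [hcons]
          rw [sum_swap3]
          refine Finset.sum_eq_zero fun rest _ => ?_
          have hGexp : ∀ a b : TB, Gfun m d x j₁ k'' l₁ (a :: b :: rest)
              = ∑ cc : TB, (if bmul a b = some cc then cf d j₁ (l₁ ++ a :: b :: rest) k'' else 0)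
                  • m x (l₁ ++ cc :: rest) := by
            intro a b
            show cf d j₁ (l₁ ++ a :: b :: rest) k'' •
                (bmul a b).elim 0 (fun cc => m x (l₁ ++ cc :: rest)) = _
            rw [optElim, Finset.smul_sum]
            exact Finset.sum_congr rfl fun cc _ => smul_ite0 _ _ _
          simp only [hGexp]
          rw [sum_swap3]
          refine Finset.sum_eq_zero fun cc _ => ?_
          have hfac : ∑ a : TB, ∑ b : TB,
              (if bmul a b = some cc then cf d j₁ (l₁ ++ a :: b :: rest) k'' else 0)
                • m x (l₁ ++ cc :: rest)
              = (∑ a : TB, ∑ b : TB,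
                  (if bmul a b = some cc then cf d j₁ (l₁ ++ a :: b :: rest) k'' else 0))
                  • m x (l₁ ++ cc :: rest) := by
            rw [Finset.sum_smul]
            exact Finset.sum_congr rfl fun a _ => (Finset.sum_smul).symm
          rw [hfac, coef_merge d hd j₁ k'' l₁ rest cc, zero_smul]
end
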